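/- If X is an n×n complex matrix satisfying X⁴ + θ²X² + λ²I = 0 where θ, λ are nonzero reals with θ⁴ > 4λ², then exp(X) = (1/(b²-a²))·[((b sin a - a sin b)/(ab))·X³ + (cos a - cos b)·X² + ((b³ sin a - a³ sin b)/(ab))·X + (b² cos a - a² cos b)·I], where a, b are the positive reals determined by a² + b² = θ², a²b² = λ², a ≠ b. -/

import Mathlib

set_option maxHeartbeats 2000000

open Matrix NormedSpace
open scoped Nat

lemma exp_aux {A : Type*} [NormedRing A] [NormedAlgebra ℂ A] [CompleteSpace A]
    (N P : A) (a : ℝ) (ha : a ≠ 0) (hNP : N * P = N) (hPP : P * P = P)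
    (hN2 : N ^ 2 = (-((a : ℂ) ^ 2)) • P) :
    NormedSpace.exp N = 1 + ((Real.cos a - 1 : ℝ) : ℂ) • P + ((Real.sin a / a : ℝ) : ℂ) • N := by
  have haC : (a : ℂ) ≠ 0 := by exact_mod_cast ha
  have hpow_even : ∀ m : ℕ, N ^ (2 * m + 2) = ((-((a : ℂ) ^ 2)) ^ (m + 1)) • P := by
    intro m
    induction m with
    | zero => simpa using hN2
    | succ m ih =>
      have h : 2 * (m + 1) + 2 = (2 * m + 2) + 2 := by ring
      rw [h, pow_add, ih, hN2, smul_mul_assoc, mul_smul_comm, smul_smul, hPP, ← pow_succ]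
  have hpow_odd : ∀ m : ℕ, N ^ (2 * m + 1) = ((-((a : ℂ) ^ 2)) ^ m) • N := by
    intro m
    induction m with
    | zero => simp
    | succ m ih =>
      have h : 2 * (m + 1) + 1 = (2 * m + 1) + 2 := by ring
      rw [h, pow_add, ih, hN2, smul_mul_assoc, mul_smul_comm, smul_smul, hNP, ← pow_succ]
  have hexp : NormedSpace.exp N = ∑' n : ℕ, ((n ! : ℂ))⁻¹ • N ^ n := by
    rw [exp_eq_tsum ℂ]
  have hs : Summable (fun n : ℕ => ((n ! : ℂ))⁻¹ • N ^ n) := expSeries_summable' N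
  have he : Summable (fun k : ℕ => (((2 * k)! : ℂ))⁻¹ • N ^ (2 * k)) :=
    hs.comp_injective (fun x y h => by omega)
  have ho : Summable (fun k : ℕ => (((2 * k + 1)! : ℂ))⁻¹ • N ^ (2 * k + 1)) :=
    hs.comp_injective (fun x y h => by omega)
  rw [hexp, ← tsum_even_add_odd he ho]
  -- even part
  have hcos0 := Complex.hasSum_cos (a : ℂ)
  have hcos : HasSum (fun k : ℕ => (-1 : ℂ) ^ (k + 1) * (a : ℂ) ^ (2 * (k + 1)) / ((2 * (k + 1))! : ℂ))
      (Complex.cos (a : ℂ) - 1) := by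
    have := (hasSum_nat_add_iff
      (f := fun n : ℕ => (-1 : ℂ) ^ n * (a : ℂ) ^ (2 * n) / ((2 * n)! : ℂ)) 1
      (g := Complex.cos (a : ℂ) - 1))
    rw [this]
    simpa using hcos0
  have heval : (∑' k : ℕ, (((2 * k)! : ℂ))⁻¹ • N ^ (2 * k))
      = 1 + ((Real.cos a - 1 : ℝ) : ℂ) • P := by
    rw [he.tsum_eq_zero_add]
    have h0 : (((2 * 0)! : ℂ))⁻¹ • N ^ (2 * 0) = 1 := by norm_num
    rw [h0]
    congr 1
    have h1 : ∀ k : ℕ, (((2 * (k + 1))! : ℂ))⁻¹ • N ^ (2 * (k + 1))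
        = ((-1 : ℂ) ^ (k + 1) * (a : ℂ) ^ (2 * (k + 1)) / ((2 * (k + 1))! : ℂ)) • P := by
      intro k
      have h2 : 2 * (k + 1) = 2 * k + 2 := by ring
      rw [h2, hpow_even k, smul_smul]
      congr 1
      rw [neg_pow, ← pow_mul]
      have : 2 * (k + 1) = (k + 1) * 2 := by ring
      rw [h2] at this
      rw [mul_comm 2 (k+1)]
      ring
    calc (∑' k : ℕ, (((2 * (k + 1))! : ℂ))⁻¹ • N ^ (2 * (k + 1)))
        = ∑' k : ℕ, ((-1 : ℂ) ^ (k + 1) * (a : ℂ) ^ (2 * (k + 1)) / ((2 * (k + 1))! : ℂ)) • P :=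
          tsum_congr h1
      _ = (Complex.cos (a : ℂ) - 1) • P := (hcos.smul_const P).tsum_eq
      _ = ((Real.cos a - 1 : ℝ) : ℂ) • P := by
          push_cast [Complex.ofReal_cos]
          ring_nf
  -- odd part
  have hsin0 := Complex.hasSum_sin (a : ℂ)
  have hsin : HasSum (fun k : ℕ => (-1 : ℂ) ^ k * (a : ℂ) ^ (2 * k + 1) / ((2 * k + 1)! : ℂ) / (a : ℂ))
      (Complex.sin (a : ℂ) / (a : ℂ)) := hsin0.div_const _
  have hoeval : (∑' k : ℕ, (((2 * k + 1)! : ℂ))⁻¹ • N ^ (2 * k + 1))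
      = ((Real.sin a / a : ℝ) : ℂ) • N := by
    have h1 : ∀ k : ℕ, (((2 * k + 1)! : ℂ))⁻¹ • N ^ (2 * k + 1)
        = ((-1 : ℂ) ^ k * (a : ℂ) ^ (2 * k + 1) / ((2 * k + 1)! : ℂ) / (a : ℂ)) • N := by
      intro k
      rw [hpow_odd k, smul_smul]
      congr 1
      rw [neg_pow, ← pow_mul]
      have hf : (((2 * k + 1)! : ℂ)) ≠ 0 := Nat.cast_ne_zero.2 (Nat.factorial_ne_zero _)
      field_simp
      ring
    calc (∑' k : ℕ, (((2 * k + 1)! : ℂ))⁻¹ • N ^ (2 * k + 1))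
        = ∑' k : ℕ, ((-1 : ℂ) ^ k * (a : ℂ) ^ (2 * k + 1) / ((2 * k + 1)! : ℂ) / (a : ℂ)) • N :=
          tsum_congr h1
      _ = (Complex.sin (a : ℂ) / (a : ℂ)) • N := (hsin.smul_const N).tsum_eq
      _ = ((Real.sin a / a : ℝ) : ℂ) • N := by
          push_cast [Complex.ofReal_sin]
          ring_nf
  rw [heval, hoeval]

theorem exp_of_quartic_minpoly {n : ℕ} (X : Matrix (Fin n) (Fin n) ℂ)
    (θ lam : ℝ) (hθ : θ ≠ 0) (hlam : lam ≠ 0) (hdisc : θ ^ 4 > 4 * lam ^ 2)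
    (hmin : X ^ 4 + ((θ : ℂ) ^ 2) • X ^ 2
        + ((lam : ℂ) ^ 2) • (1 : Matrix (Fin n) (Fin n) ℂ) = 0)
    (a b : ℝ) (ha : 0 < a) (hb : 0 < b) (hab : a ≠ b)
    (hsum : a ^ 2 + b ^ 2 = θ ^ 2) (hprod : a ^ 2 * b ^ 2 = lam ^ 2) :
    NormedSpace.exp X = (((1 / (b ^ 2 - a ^ 2) : ℝ) : ℂ)) •
      ((((( b * Real.sin a - a * Real.sin b) / (a * b) : ℝ) : ℂ)) • X ^ 3
        + (((Real.cos a - Real.cos b : ℝ) : ℂ)) • X ^ 2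
        + ((((b ^ 3 * Real.sin a - a ^ 3 * Real.sin b) / (a * b) : ℝ) : ℂ)) • X
        + (((b ^ 2 * Real.cos a - a ^ 2 * Real.cos b : ℝ) : ℂ)) •
            (1 : Matrix (Fin n) (Fin n) ℂ)) := by
  letI : SeminormedRing (Matrix (Fin n) (Fin n) ℂ) := Matrix.linftyOpSemiNormedRing
  letI : NormedRing (Matrix (Fin n) (Fin n) ℂ) := Matrix.linftyOpNormedRing
  letI : NormedAlgebra ℂ (Matrix (Fin n) (Fin n) ℂ) := Matrix.linftyOpNormedAlgebra
  have haC : (a : ℂ) ≠ 0 := by exact_mod_cast ha.ne'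
  have hbC : (b : ℂ) ≠ 0 := by exact_mod_cast hb.ne'
  have hneR : (b : ℝ) ^ 2 - a ^ 2 ≠ 0 := by
    intro h; apply hab; nlinarith
  set d : ℂ := (b : ℂ) ^ 2 - (a : ℂ) ^ 2 with hd_def
  have hd : d ≠ 0 := by
    rw [hd_def]
    exact_mod_cast hneR
  set A : Matrix (Fin n) (Fin n) ℂ := X ^ 2 + ((a : ℂ) ^ 2) • 1 with hA_def
  set B : Matrix (Fin n) (Fin n) ℂ := X ^ 2 + ((b : ℂ) ^ 2) • 1 with hB_def
  have hBeq : B = A + d • 1 := by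
    rw [hA_def, hB_def, hd_def]; module
  have hmin' : X ^ 4 + ((a : ℂ) ^ 2 + (b : ℂ) ^ 2) • X ^ 2
      + ((a : ℂ) ^ 2 * (b : ℂ) ^ 2) • (1 : Matrix (Fin n) (Fin n) ℂ) = 0 := by
    have h1 : ((a : ℂ) ^ 2 + (b : ℂ) ^ 2) = (θ : ℂ) ^ 2 := by exact_mod_cast congrArg Complex.ofReal hsum
    have h2 : ((a : ℂ) ^ 2 * (b : ℂ) ^ 2) = (lam : ℂ) ^ 2 := by exact_mod_cast congrArg Complex.ofReal hprod
    rw [h1, h2]; exact hmin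
  have hX4 : X ^ 4 = (-((a : ℂ) ^ 2 + (b : ℂ) ^ 2)) • X ^ 2
      + (-((a : ℂ) ^ 2 * (b : ℂ) ^ 2)) • (1 : Matrix (Fin n) (Fin n) ℂ) := by
    have := hmin'
    rw [add_assoc] at this
    rw [add_eq_zero_iff_eq_neg] at this
    rw [this]; module
  have hX2X2 : X ^ 2 * X ^ 2 = X ^ 4 := by rw [← pow_add]
  have hAB : A * B = 0 := by
    rw [hA_def, hB_def]
    simp only [mul_add, add_mul, smul_mul_assoc, mul_smul_comm, mul_one, one_mul, smul_smul,
      hX2X2, hX4]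
    module
  have hBA : B * A = 0 := by
    rw [hA_def, hB_def]
    simp only [mul_add, add_mul, smul_mul_assoc, mul_smul_comm, mul_one, one_mul, smul_smul,
      hX2X2, hX4]
    module
  have hXB : X * B = B * X := by
    rw [hB_def, mul_add, add_mul, mul_smul_comm, smul_mul_assoc, mul_one, one_mul,
      ← pow_succ, ← pow_succ']
  have hXA : X * A = A * X := by
    rw [hA_def, mul_add, add_mul, mul_smul_comm, smul_mul_assoc, mul_one, one_mul,
      ← pow_succ, ← pow_succ']
  have hX2B : X ^ 2 * B = (-((a : ℂ) ^ 2)) • B := by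
    rw [hB_def, mul_add, mul_smul_comm, mul_one, hX2X2, hX4]
    module
  have hX2A : X ^ 2 * A = (-((b : ℂ) ^ 2)) • A := by
    rw [hA_def, mul_add, mul_smul_comm, mul_one, hX2X2, hX4]
    module
  have hBB : B * B = d • B := by
    nth_rewrite 2 [hBeq]
    rw [mul_add, hBA, zero_add, mul_smul_comm, mul_one]
  have hAA : A * A = (-d) • A := by
    have hAeq : A = B - d • 1 := by rw [hBeq]; abel
    nth_rewrite 2 [hAeq]
    rw [mul_sub, hAB, zero_sub, mul_smul_comm, mul_one, neg_smul]
  set P : Matrix (Fin n) (Fin n) ℂ := d⁻¹ • B with hP_def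
  set Q : Matrix (Fin n) (Fin n) ℂ := (-d⁻¹) • A with hQ_def
  have hPP : P * P = P := by
    rw [hP_def, smul_mul_assoc, mul_smul_comm, hBB, smul_smul, smul_smul]
    congr 1
    field_simp
  have hQQ : Q * Q = Q := by
    rw [hQ_def, smul_mul_assoc, mul_smul_comm, hAA, smul_smul, smul_smul]
    congr 1
    field_simp
  have hPQ : P * Q = 0 := by
    rw [hP_def, hQ_def, smul_mul_assoc, mul_smul_comm, hBA, smul_zero, smul_zero]
  have hQP : Q * P = 0 := by
    rw [hP_def, hQ_def, smul_mul_assoc, mul_smul_comm, hAB, smul_zero, smul_zero]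
  have hPQ1 : P + Q = 1 := by
    rw [hP_def, hQ_def, hBeq]
    rw [smul_add, smul_smul]
    rw [inv_mul_cancel₀ hd]
    module
  have hXP : X * P = P * X := by rw [hP_def, mul_smul_comm, smul_mul_assoc, hXB]
  have hXQ : X * Q = Q * X := by rw [hQ_def, mul_smul_comm, smul_mul_assoc, hXA]
  have hX2P : X ^ 2 * P = (-((a : ℂ) ^ 2)) • P := by
    rw [hP_def, mul_smul_comm, hX2B, smul_smul, smul_smul, mul_comm]
  have hX2Q : X ^ 2 * Q = (-((b : ℂ) ^ 2)) • Q := by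
    rw [hQ_def, mul_smul_comm, hX2A, smul_smul, smul_smul, mul_comm]
  set N : Matrix (Fin n) (Fin n) ℂ := X * P with hN_def
  set M : Matrix (Fin n) (Fin n) ℂ := X * Q with hM_def
  have hcXP : Commute X P := hXP
  have hcXQ : Commute X Q := hXQ
  have hN2 : N ^ 2 = (-((a : ℂ) ^ 2)) • P := by
    rw [hN_def, hcXP.mul_pow, pow_two P, hPP, hX2P]
  have hM2 : M ^ 2 = (-((b : ℂ) ^ 2)) • Q := by
    rw [hM_def, hcXQ.mul_pow, pow_two Q, hQQ, hX2Q]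
  have hNP : N * P = N := by rw [hN_def, mul_assoc, hPP]
  have hMQ : M * Q = M := by rw [hM_def, mul_assoc, hQQ]
  have hNM : N * M = 0 := by
    rw [hN_def, hM_def, mul_assoc, ← mul_assoc P X Q, ← hXP, mul_assoc X P Q, hPQ, mul_zero,
      mul_zero]
  have hMN : M * N = 0 := by
    rw [hN_def, hM_def, mul_assoc, ← mul_assoc Q X P, ← hXQ, mul_assoc X Q P, hQP, mul_zero,
      mul_zero]
  have hPM : P * M = 0 := by
    rw [hM_def, ← mul_assoc, ← hXP, mul_assoc, hPQ, mul_zero]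
  have hNQ : N * Q = 0 := by
    rw [hN_def, mul_assoc, hPQ, mul_zero]
  have hXsplit : N + M = X := by rw [hN_def, hM_def, ← mul_add, hPQ1, mul_one]
  have hexpX : NormedSpace.exp X = NormedSpace.exp N * NormedSpace.exp M := by
    rw [← hXsplit]
    exact Matrix.exp_add_of_commute N M (hNM.trans hMN.symm)
  rw [hexpX]
  erw [exp_aux N P a ha.ne' hNP hPP hN2, exp_aux M Q b hb.ne' hMQ hQQ hM2]
  have hXX2 : X * X ^ 2 = X ^ 3 := by rw [← pow_succ']
  have hPexp : P = d⁻¹ • (X ^ 2 + ((b : ℂ) ^ 2) • 1) := by rw [hP_def, hB_def]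
  have hQexp : Q = (-d⁻¹) • (X ^ 2 + ((a : ℂ) ^ 2) • 1) := by rw [hQ_def, hA_def]
  have hNexp : N = d⁻¹ • (X ^ 3 + ((b : ℂ) ^ 2) • X) := by
    rw [hN_def, hP_def, hB_def, mul_smul_comm, mul_add, mul_smul_comm, mul_one, hXX2]
  have hMexp : M = (-d⁻¹) • (X ^ 3 + ((a : ℂ) ^ 2) • X) := by
    rw [hM_def, hQ_def, hA_def, mul_smul_comm, mul_add, mul_smul_comm, mul_one, hXX2]
  have hexpand : (1 + ((Real.cos a - 1 : ℝ) : ℂ) • P + ((Real.sin a / a : ℝ) : ℂ) • N) *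
      (1 + ((Real.cos b - 1 : ℝ) : ℂ) • Q + ((Real.sin b / b : ℝ) : ℂ) • M)
      = 1 + ((Real.cos a - 1 : ℝ) : ℂ) • P + ((Real.sin a / a : ℝ) : ℂ) • N
        + ((Real.cos b - 1 : ℝ) : ℂ) • Q + ((Real.sin b / b : ℝ) : ℂ) • M := by
    simp only [mul_add, add_mul, one_mul, mul_one, smul_mul_assoc, mul_smul_comm,
      hPQ, hPM, hNQ, hNM, smul_zero, add_zero]
    try abel
  rw [hexpand]
  rw [show (1 : Matrix (Fin n) (Fin n) ℂ) = P + Q from hPQ1.symm]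
  rw [hPexp, hQexp, hNexp, hMexp]
  have hd' : (b : ℂ) ^ 2 - (a : ℂ) ^ 2 ≠ 0 := hd
  match_scalars <;> (rw [hd_def] <;> push_cast <;> field_simp <;> ring)
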